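/- The function v ↦ J(Σ + v·e_j e_jᵀ), for v ≥ 0, is convex, where Σ is a symmetric positive semidefinite m×m matrix with Σ·e_j = 0 and j is a fixed index. (Convexity of the single-sensor update problem (24)/(31) in the independent attack construction.) -/

import Mathlib

open Matrix Real

lemma posdef_diag_pos {m : ℕ} {M : Matrix (Fin m) (Fin m) ℝ} (hM : M.PosDef) (j : Fin m) :
    0 < M j j := by
  exact hM.diag_pos

lemma det_add_smul_std {m : ℕ} (A : Matrix (Fin m) (Fin m) ℝ) (j : Fin m) (v : ℝ) :
    (A + v • Matrix.single j j 1).det = A.det + v * A.adjugate j j := by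
  have hE : A + v • Matrix.single j j 1
      = A.updateRow j (A j + Pi.single j v) := by
    ext i k
    by_cases hij : i = j
    · subst hij
      simp [Matrix.updateRow_self, Matrix.single, Pi.single_apply, eq_comm]
    · simp [Matrix.updateRow_ne hij, Matrix.single, hij, Ne.symm hij]
  have hsingle : (Pi.single j v : Fin m → ℝ) = v • (Pi.single j 1 : Fin m → ℝ) := by
    funext k; simp [Pi.single_apply]
  rw [hE, Matrix.det_updateRow_add, hsingle, Matrix.det_updateRow_smul,
    Matrix.updateRow_eq_self, Matrix.adjugate_apply]

lemma det_add_smul_std' {m : ℕ} {A : Matrix (Fin m) (Fin m) ℝ} (hA : A.det ≠ 0)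
    (j : Fin m) (v : ℝ) :
    (A + v • Matrix.single j j 1).det = A.det * (1 + v * A⁻¹ j j) := by
  rw [det_add_smul_std]
  rw [Matrix.inv_def, Matrix.smul_apply, Ring.inverse_eq_inv, smul_eq_mul]
  field_simp

lemma trace_mul_std {m : ℕ} (M : Matrix (Fin m) (Fin m) ℝ) (j : Fin m) :
    (M * Matrix.single j j 1).trace = M j j := by
  simp [Matrix.trace, Matrix.diag, Matrix.mul_apply, Matrix.single,
    Finset.sum_ite_eq, ite_and]

lemma concave_log_affine {a : ℝ} (ha : 0 ≤ a) :
    ConcaveOn ℝ (Set.Ici (0:ℝ)) (fun v : ℝ => Real.log (1 + v * a)) := by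
  have h := (strictConcaveOn_log_Ioi.concaveOn).comp_affineMap
    (AffineMap.lineMap (1:ℝ) (1 + a))
  have hsub : Set.Ici (0:ℝ) ⊆ (AffineMap.lineMap (1:ℝ) (1+a)) ⁻¹' Set.Ioi 0 := by
    intro v hv
    simp only [Set.mem_preimage, AffineMap.lineMap_apply, Set.mem_Ioi, smul_eq_mul,
      vsub_eq_sub, vadd_eq_add]
    have : 0 ≤ v * a := mul_nonneg hv ha
    nlinarith
  refine (h.subset hsub (convex_Ici 0)).congr ?_
  intro v hv
  simp only [Function.comp, AffineMap.lineMap_apply, smul_eq_mul, vsub_eq_sub, vadd_eq_add]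
  ring_nf

/-- The attack cost `J(S) = (1-λ)·log det(Σ_YY + S) − log det(σ²·I_m + S) + λ·tr(Σ_YY⁻¹ S)`. -/
noncomputable def attackCost (m : ℕ) (σ lam : ℝ)
    (Syy : Matrix (Fin m) (Fin m) ℝ) (S : Matrix (Fin m) (Fin m) ℝ) : ℝ :=
  (1 - lam) * Real.log (Syy + S).det
    - Real.log (σ ^ 2 • (1 : Matrix (Fin m) (Fin m) ℝ) + S).det
    + lam * (Syy⁻¹ * S).trace

/-- Convexity of the single-sensor update problem (24)/(31) in the independent attack
construction: `v ↦ J(Σ + v·e_j e_jᵀ)` is convex on `[0, ∞)`. -/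
theorem single_sensor_update_convexOn
    (m : ℕ) (hm : 1 ≤ m) (σ lam : ℝ) (hσ : 0 < σ) (hlam : 1 ≤ lam)
    (Syy : Matrix (Fin m) (Fin m) ℝ) (hYY : Syy.PosDef)
    (S : Matrix (Fin m) (Fin m) ℝ) (hSsym : S.IsSymm) (hS : S.PosSemidef)
    (j : Fin m) (hSj : S.mulVec (Pi.single j 1) = 0) :
    ConvexOn ℝ (Set.Ici (0 : ℝ))
      (fun v : ℝ => attackCost m σ lam Syy (S + v • Matrix.single j j 1)) := by
  set A := Syy + S with hAdef
  set B := σ ^ 2 • (1 : Matrix (Fin m) (Fin m) ℝ) + S with hBdef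
  have hA : A.PosDef := hYY.add_posSemidef hS
  have hB : B.PosDef := by
    have h1 : (σ ^ 2 • (1 : Matrix (Fin m) (Fin m) ℝ)).PosDef := by
      rw [Matrix.smul_one_eq_diagonal]
      exact Matrix.PosDef.diagonal (fun i => by positivity)
    exact h1.add_posSemidef hS
  have ha : 0 < A⁻¹ j j := posdef_diag_pos hA.inv j
  have hb : 0 < B⁻¹ j j := posdef_diag_pos hB.inv j
  have hd : 0 < Syy⁻¹ j j := posdef_diag_pos hYY.inv j
  set a := A⁻¹ j j
  set b := B⁻¹ j j
  set d := Syy⁻¹ j j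
  -- convexity of the model function
  have h1 : ConvexOn ℝ (Set.Ici (0:ℝ)) (fun v : ℝ => (lam - 1) * -Real.log (1 + v * a)) := by
    have := ((concave_log_affine ha.le).neg).smul (show (0:ℝ) ≤ lam - 1 by linarith)
    simpa [smul_eq_mul] using this
  have h2 : ConvexOn ℝ (Set.Ici (0:ℝ)) (fun v : ℝ => -Real.log (1 + v * b)) :=
    (concave_log_affine hb.le).neg
  have h3 : ConvexOn ℝ (Set.Ici (0:ℝ)) (fun v : ℝ => (lam * d) * v) := by
    have := (convexOn_id (convex_Ici (0:ℝ))).smul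
      (show (0:ℝ) ≤ lam * d by positivity)
    simpa [smul_eq_mul] using this
  have hF : ConvexOn ℝ (Set.Ici (0:ℝ))
      (fun v : ℝ => (lam - 1) * -Real.log (1 + v * a) + -Real.log (1 + v * b)
        + (lam * d) * v
        + ((1 - lam) * Real.log A.det - Real.log B.det + lam * (Syy⁻¹ * S).trace)) :=
    ((h1.add h2).add h3).add_const _
  refine hF.congr ?_
  intro v hv
  have hv0 : (0:ℝ) ≤ v := hv
  have h1a : (0:ℝ) < 1 + v * a := by nlinarith
  have h1b : (0:ℝ) < 1 + v * b := by nlinarith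
  simp only [attackCost]
  have keyA : Syy + (S + v • Matrix.single j j 1)
      = A + v • Matrix.single j j 1 := by rw [hAdef, add_assoc]
  have keyB : σ ^ 2 • (1 : Matrix (Fin m) (Fin m) ℝ) + (S + v • Matrix.single j j 1)
      = B + v • Matrix.single j j 1 := by rw [hBdef, add_assoc]
  rw [keyA, keyB,
    det_add_smul_std' hA.det_pos.ne' j v, det_add_smul_std' hB.det_pos.ne' j v,
    Real.log_mul hA.det_pos.ne' h1a.ne', Real.log_mul hB.det_pos.ne' h1b.ne',
    Matrix.mul_add, Matrix.trace_add, Matrix.mul_smul, Matrix.trace_smul,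
    trace_mul_std, smul_eq_mul]
  ring
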